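/- There exists a constant c > 0 such that the following holds for the (1+1) EA with one-bit prior noise probability p ≤ 1/2 on LeadingOnes: for every n and every current search point x with LO(x) = i ≥ 4, the probability that the current search point after one generation has LeadingOnes value strictly less than i/2 is at least c·p·i²/n². In particular this probability is Ω(p) when i = Ω(n). -/

import Mathlib

open Finset ENNReal

/-- A search point: a bit string of length `n`. -/
abbrev Point (n : ℕ) := Fin n → Bool

/-- The LeadingOnes fitness: the length of the longest all-ones prefix. -/
def LO {n : ℕ} (x : Point n) : ℕ :=
  (Finset.univ.filter fun i : Fin n => ∀ j : Fin n, j ≤ i → x j = true).card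

/-- The all-ones string, the unique global optimum of LeadingOnes. -/
def allOnes (n : ℕ) : Point n := fun _ => true

/-- Probability that standard bit mutation (flip each bit independently with
probability `1/n`) turns `x` into `y`. -/
noncomputable def mutProb (n : ℕ) (x y : Point n) : ℝ :=
  (1 / n) ^ hammingDist x y * (1 - 1 / n) ^ (n - hammingDist x y)

/-- Probability that one-bit prior noise with probability `p` turns `x` into `u`:
with probability `1 - p` no noise occurs, otherwise one uniformly random bit flips. -/
noncomputable def oneBitNoise (n : ℕ) (p : ℝ) (x u : Point n) : ℝ :=
  (if u = x then 1 - p else 0) + (if hammingDist x u = 1 then p / n else 0)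

/-- Probability that offspring `y` is accepted against parent `x`, i.e. that the
noisy fitness of `y` is at least the noisy fitness of `x` (noise applied
independently to parent and offspring). -/
noncomputable def accProb (n : ℕ) (noise : Point n → Point n → ℝ)
    (f : Point n → ℝ) (x y : Point n) : ℝ :=
  ∑ u : Point n, ∑ v : Point n,
    noise x u * noise y v * (if f u ≤ f v then 1 else 0)

/-- One-generation transition probability of a (1+1)-type algorithm with mutation
kernel `mutK`, prior-noise kernel `noise` and fitness `f`: mutation creates an
offspring, which replaces the parent iff its noisy fitness is at least the
parent's noisy fitness. -/
noncomputable def step (n : ℕ) (mutK noise : Point n → Point n → ℝ)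
    (f : Point n → ℝ) (x z : Point n) : ℝ :=
  mutK x z * accProb n noise f x z
    + (if z = x then ∑ y : Point n, mutK x y * (1 - accProb n noise f x y) else 0)

/-- One-generation transition probability of the (1+1) EA with one-bit prior
noise probability `p` on LeadingOnes. -/
noncomputable def stepEA (n : ℕ) (p : ℝ) : Point n → Point n → ℝ :=
  step n (mutProb n) (oneBitNoise n p) fun x => (LO x : ℝ)

/-- Probability that a Markov chain with transition matrix `P` started in `x`
does not visit `opt` within the first `t` generations (time `0` included). -/
noncomputable def survive (n : ℕ) (P : Point n → Point n → ℝ) (opt : Point n) :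
    ℕ → Point n → ℝ
  | 0, x => if x = opt then 0 else 1
  | t + 1, x => if x = opt then 0 else ∑ y : Point n, P x y * survive n P opt t y

/-- Expected optimisation time, measured in fitness evaluations
(`evalsPerGen` evaluations per generation), of a Markov chain with transition
matrix `P` started from a uniformly random search point, until it first hits
`opt`; computed as `evalsPerGen · Σ_t P(T > t)`. -/
noncomputable def expectedTime (n : ℕ) (P : Point n → Point n → ℝ)
    (opt : Point n) (evalsPerGen : ℕ) : ℝ≥0∞ :=
  (evalsPerGen : ℝ≥0∞) * ∑' t : ℕ, ENNReal.ofReal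
    ((Fintype.card (Point n) : ℝ)⁻¹ * ∑ x : Point n, survive n P opt t x)

/-- Expected optimisation time (number of fitness evaluations, two per
generation) of the (1+1) EA with one-bit prior noise probability `p` on
LeadingOnes with problem size `n`, from a uniformly random initial search point. -/
noncomputable def EAtime (n : ℕ) (p : ℝ) : ℝ≥0∞ :=
  expectedTime n (stepEA n p) (allOnes n) 2


section Aux
open Finset

/-- transfer sums over a Fin-filter to a range sum -/
lemma sum_fin_val_lt {M : Type*} [AddCommMonoid M] {n m : ℕ} (hn : 0 < n) (h : m ≤ n) (f : ℕ → M) :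
    ∑ j ∈ Finset.univ.filter (fun j : Fin n => j.val < m), f j.val
      = ∑ k ∈ Finset.range m, f k := by
  refine Finset.sum_nbij' (fun j : Fin n => j.val) (fun a => (⟨a % n, Nat.mod_lt _ hn⟩ : Fin n))
    ?_ ?_ ?_ ?_ ?_
  · intro a ha; simp only [mem_filter] at ha; exact Finset.mem_range.mpr ha.2
  · intro a ha
    have : a < m := Finset.mem_range.mp ha
    have hmod : a % n = a := Nat.mod_eq_of_lt (lt_of_lt_of_le this h)
    simp [hmod, this]
  · intro a ha
    ext
    simp [Nat.mod_eq_of_lt a.isLt]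
  · intro a ha
    have : a < m := Finset.mem_range.mp ha
    simp [Nat.mod_eq_of_lt (lt_of_lt_of_le this h)]
  · intro a _; rfl

lemma card_val_lt {n : ℕ} (m : ℕ) (hn : 0 < n) (h : m ≤ n) :
    (Finset.univ.filter fun k : Fin n => k.val < m).card = m := by
  have := sum_fin_val_lt (M := ℕ) hn h (fun _ => 1)
  simpa using this

lemma LO_le {n : ℕ} (x : Point n) : LO x ≤ n := by
  classical
  calc LO x ≤ (Finset.univ : Finset (Fin n)).card := Finset.card_filter_le _ _
  _ = n := by simp

lemma LO_le_of_false {n : ℕ} {x : Point n} {j : Fin n} (hj : x j = false) :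
    LO x ≤ j.val := by
  classical
  have hn : 0 < n := j.pos
  calc LO x ≤ (Finset.univ.filter fun k : Fin n => k.val < j.val).card := by
        apply Finset.card_le_card
        intro k hk
        simp only [Finset.mem_filter, Finset.mem_univ, true_and] at *
        by_contra hlt
        push_neg at hlt
        have := hk j (Fin.le_def.mpr hlt)
        simp [hj] at this
  _ = j.val := card_val_lt j.val hn (le_of_lt j.isLt)

lemma prefix_true {n : ℕ} {x : Point n} {j : Fin n} (h : j.val < LO x) : x j = true := by
  by_contra hf
  have hfalse : x j = false := by simpa using hf
  have := LO_le_of_false hfalse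
  omega

lemma LO_update {n : ℕ} {x : Point n} {j : Fin n} (hj : j.val < LO x) :
    LO (Function.update x j false) = j.val := by
  classical
  have hn : 0 < n := j.pos
  unfold LO
  have hset : (Finset.univ.filter fun k : Fin n =>
        ∀ l : Fin n, l ≤ k → Function.update x j false l = true)
      = Finset.univ.filter fun k : Fin n => k.val < j.val := by
    ext k
    simp only [Finset.mem_filter, Finset.mem_univ, true_and]
    constructor
    · intro hk
      by_contra h'
      push_neg at h'
      have := hk j (Fin.le_def.mpr h')
      simp [Function.update_self] at this
    · intro hk l hl
      have hlk : l.val ≤ k.val := Fin.le_def.mp hl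
      have hlj : l ≠ j := by
        intro e; subst e; omega
      rw [Function.update_of_ne hlj]
      exact prefix_true (by omega)
  rw [hset, card_val_lt j.val hn (le_of_lt j.isLt)]

lemma ham_update {n : ℕ} {x : Point n} {j : Fin n} (hx : x j = true) :
    hammingDist x (Function.update x j false) = 1 := by
  classical
  have hset : (Finset.univ.filter fun k : Fin n => x k ≠ Function.update x j false k) = {j} := by
    ext k
    simp only [Finset.mem_filter, Finset.mem_univ, true_and, Finset.mem_singleton]
    constructor
    · intro hk; by_contra h'; exact hk (by rw [Function.update_of_ne h'])
    · intro e; subst e; simp [hx]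
  show (Finset.univ.filter fun k : Fin n => x k ≠ Function.update x j false k).card = 1
  rw [hset, Finset.card_singleton]

lemma update_ne {n : ℕ} {x : Point n} {j : Fin n} (hx : x j = true) :
    Function.update x j false ≠ x := by
  intro h
  have := congrFun h j
  simp [hx] at this

lemma noise_nonneg {n : ℕ} {p : ℝ} (hp0 : 0 ≤ p) (hp1 : p ≤ 1) (x u : Point n) :
    0 ≤ oneBitNoise n p x u := by
  unfold oneBitNoise
  have h1 : (0:ℝ) ≤ 1 - p := by linarith
  have h2 : (0:ℝ) ≤ p / n := div_nonneg hp0 (Nat.cast_nonneg n)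
  split_ifs <;> simp <;> linarith

lemma noise_self {n : ℕ} (p : ℝ) (z : Point n) : oneBitNoise n p z z = 1 - p := by
  unfold oneBitNoise
  simp [hammingDist_self]

lemma noise_flip {n : ℕ} (p : ℝ) {x : Point n} {k : Fin n} (hx : x k = true) :
    oneBitNoise n p x (Function.update x k false) = p / n := by
  unfold oneBitNoise
  rw [ham_update hx]
  simp [update_ne hx]

lemma quarter {n : ℕ} (hn : 2 ≤ n) : (1/4 : ℝ) ≤ (1 - 1/(n:ℝ)) ^ (n - 1) := by
  obtain ⟨m, rfl⟩ : ∃ m, n = m + 1 := ⟨n - 1, by omega⟩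
  have hm : 1 ≤ m := by omega
  have hm0 : (0:ℝ) < m := by exact_mod_cast hm
  have key : (1 + 1/(m:ℝ)) ^ m ≤ Real.exp 1 := by
    have h1 : (1 + 1/(m:ℝ)) ≤ Real.exp (1/m) := by
      have := Real.add_one_le_exp (1/(m:ℝ)); linarith
    calc (1 + 1/(m:ℝ)) ^ m ≤ (Real.exp (1/m)) ^ m := by
          apply pow_le_pow_left₀ (by positivity) h1
      _ = Real.exp (m * (1/m)) := by rw [Real.exp_nat_mul]
      _ = Real.exp 1 := by rw [mul_one_div, div_self (ne_of_gt hm0)]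
  have hexp4 : Real.exp 1 ≤ 4 := by
    have := Real.exp_one_lt_d9; linarith
  have heq : (1 - 1/((m:ℝ)+1)) = (1 + 1/(m:ℝ))⁻¹ := by
    field_simp
    ring
  have hpos : (0:ℝ) < (1 + 1/(m:ℝ)) ^ m := by positivity
  have hinv : ((1 + 1/(m:ℝ)) ^ m)⁻¹ ≥ (Real.exp 1)⁻¹ :=
    inv_anti₀ hpos key
  have h4 : (Real.exp 1)⁻¹ ≥ (4:ℝ)⁻¹ := inv_anti₀ (Real.exp_pos 1) hexp4
  have hcast : ((m:ℝ)+1) = ((m+1 : ℕ) : ℝ) := by push_cast; ring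
  have hfin : (1 - 1/((m+1:ℕ):ℝ)) ^ (m + 1 - 1) = ((1 + 1/(m:ℝ)) ^ m)⁻¹ := by
    rw [← hcast, heq]
    simp [inv_pow]
  rw [hfin]
  calc (1/4:ℝ) = (4:ℝ)⁻¹ := by norm_num
    _ ≤ (Real.exp 1)⁻¹ := h4
    _ ≤ ((1 + 1/(m:ℝ)) ^ m)⁻¹ := hinv

lemma acc_ge {n : ℕ} {p : ℝ} (hp0 : 0 ≤ p) (hp1 : p ≤ 1) (x : Point n) (j : Fin n)
    (hj : j.val < LO x) :
    ((j.val : ℝ) + 1) * (p / n) * (1 - p)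
      ≤ accProb n (oneBitNoise n p) (fun y => (LO y : ℝ)) x (Function.update x j false) := by
  classical
  set z := Function.update x j false with hzdef
  have hLOz : LO z = j.val := LO_update hj
  have hnn : ∀ u v : Point n, 0 ≤ oneBitNoise n p x u * oneBitNoise n p z v *
      (if ((LO u : ℝ)) ≤ ((LO v : ℝ)) then (1:ℝ) else 0) := by
    intro u v
    have h1 := noise_nonneg hp0 hp1 x u
    have h2 := noise_nonneg hp0 hp1 z v
    have : (0:ℝ) ≤ (if ((LO u : ℝ)) ≤ ((LO v : ℝ)) then (1:ℝ) else 0) := by positivity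
    positivity
  have step1 : ∑ u : Point n, oneBitNoise n p x u * oneBitNoise n p z z
        * (if ((LO u : ℝ)) ≤ ((LO z : ℝ)) then (1:ℝ) else 0)
      ≤ accProb n (oneBitNoise n p) (fun y => (LO y : ℝ)) x z := by
    unfold accProb
    apply Finset.sum_le_sum
    intro u _
    exact Finset.single_le_sum (f := fun v => oneBitNoise n p x u * oneBitNoise n p z v
      * (if ((LO u : ℝ)) ≤ ((LO v : ℝ)) then (1:ℝ) else 0)) (fun v _ => hnn u v) (mem_univ z)
  set T : Finset (Point n) :=
    (Finset.univ.filter fun k : Fin n => k.val < j.val + 1).image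
      (fun k => Function.update x k false) with hT
  have hinj : ∀ k ∈ Finset.univ.filter (fun k : Fin n => k.val < j.val + 1),
      ∀ k' ∈ Finset.univ.filter (fun k : Fin n => k.val < j.val + 1),
      Function.update x k false = Function.update x k' false → k = k' := by
    intro k hk k' hk' he
    simp only [Finset.mem_filter, Finset.mem_univ, true_and] at hk hk'
    by_contra hne
    have h1 := congrFun he k
    rw [Function.update_self, Function.update_of_ne hne] at h1
    have : x k = true := prefix_true (by omega)
    rw [this] at h1
    exact Bool.noConfusion h1
  have step2 : ∑ u ∈ T, oneBitNoise n p x u * oneBitNoise n p z z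
        * (if ((LO u : ℝ)) ≤ ((LO z : ℝ)) then (1:ℝ) else 0)
      ≤ ∑ u : Point n, oneBitNoise n p x u * oneBitNoise n p z z
        * (if ((LO u : ℝ)) ≤ ((LO z : ℝ)) then (1:ℝ) else 0) := by
    apply Finset.sum_le_sum_of_subset_of_nonneg (Finset.subset_univ T)
    intro u _ _
    exact hnn u z
  have step3 : ∑ u ∈ T, oneBitNoise n p x u * oneBitNoise n p z z
        * (if ((LO u : ℝ)) ≤ ((LO z : ℝ)) then (1:ℝ) else 0)
      = ((j.val : ℝ) + 1) * ((p / n) * (1 - p)) := by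
    rw [hT, Finset.sum_image hinj]
    have hval : ∀ k ∈ Finset.univ.filter (fun k : Fin n => k.val < j.val + 1),
        oneBitNoise n p x (Function.update x k false) * oneBitNoise n p z z
          * (if ((LO (Function.update x k false) : ℝ)) ≤ ((LO z : ℝ)) then (1:ℝ) else 0)
        = (p / n) * (1 - p) := by
      intro k hk
      simp only [Finset.mem_filter, Finset.mem_univ, true_and] at hk
      have hkLO : k.val < LO x := by omega
      have hxk : x k = true := prefix_true hkLO
      rw [noise_flip p hxk, noise_self, LO_update hkLO, hLOz]
      have hle : ((k.val : ℕ) : ℝ) ≤ ((j.val : ℕ) : ℝ) := by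
        exact_mod_cast Nat.lt_succ_iff.mp hk
      rw [if_pos hle, mul_one]
    rw [Finset.sum_congr rfl hval, Finset.sum_const]
    rw [card_val_lt (j.val + 1) j.pos j.isLt]
    ring
  calc ((j.val : ℝ) + 1) * (p / n) * (1 - p)
      = ((j.val : ℝ) + 1) * ((p / n) * (1 - p)) := by ring
    _ = ∑ u ∈ T, oneBitNoise n p x u * oneBitNoise n p z z
        * (if ((LO u : ℝ)) ≤ ((LO z : ℝ)) then (1:ℝ) else 0) := step3.symm
    _ ≤ ∑ u : Point n, oneBitNoise n p x u * oneBitNoise n p z z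
        * (if ((LO u : ℝ)) ≤ ((LO z : ℝ)) then (1:ℝ) else 0) := step2
    _ ≤ _ := step1

end Aux

/-- **Lemma (probability of a large drop in fitness).**
There exists a constant `c > 0` such that for the (1+1) EA with one-bit prior
noise probability `p ≤ 1/2` on LeadingOnes: for every `n` and every current
search point `x` with `LO(x) = i ≥ 4`, the probability that the next current
search point has LeadingOnes value strictly less than `i/2` is at least
`c · p · i² / n²`. -/
theorem EA_LeadingOnes_drop_in_fitness :
    ∃ c : ℝ, 0 < c ∧
      ∀ n : ℕ, ∀ p : ℝ, 0 ≤ p → p ≤ 1 / 2 → ∀ x : Point n, 4 ≤ LO x →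
        c * p * (LO x : ℝ) ^ 2 / n ^ 2
          ≤ ∑ z ∈ Finset.univ.filter
              (fun z : Point n => (LO z : ℝ) < (LO x : ℝ) / 2),
            stepEA n p x z := by
  classical
  refine ⟨1/64, by norm_num, ?_⟩
  intro n p hp0 hp12 x hi
  have hp1 : p ≤ 1 := by linarith
  have hin : LO x ≤ n := LO_le x
  have hn4 : 4 ≤ n := le_trans hi hin
  have hn0 : 0 < n := by omega
  have hnR : (0:ℝ) < n := by exact_mod_cast hn0
  set i := LO x with hidef
  set J : Finset (Fin n) := Finset.univ.filter (fun j : Fin n => 2 * j.val < i) with hJ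
  set F : Finset (Point n) :=
    Finset.univ.filter (fun z : Point n => (LO z : ℝ) < (i:ℝ)/2) with hF
  have hmemJ : ∀ j ∈ J, j.val < i := by
    intro j hj; simp only [hJ, Finset.mem_filter, Finset.mem_univ, true_and] at hj; omega
  have hinj : ∀ j ∈ J, ∀ j' ∈ J,
      Function.update x j false = Function.update x j' false → j = j' := by
    intro j hj j' hj' he
    by_contra hne
    have h1 := congrFun he j
    rw [Function.update_self, Function.update_of_ne hne] at h1
    have hxj : x j = true := prefix_true (hmemJ j hj)
    rw [hxj] at h1
    exact Bool.noConfusion h1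
  -- nonnegativity of step on F
  have hmutnn : ∀ z : Point n, 0 ≤ mutProb n x z := by
    intro z
    unfold mutProb
    have h1 : (0:ℝ) ≤ 1/(n:ℝ) := by positivity
    have h2 : (0:ℝ) ≤ 1 - 1/(n:ℝ) := by
      rw [sub_nonneg]
      rw [div_le_one hnR]
      exact_mod_cast hn0
    positivity
  have haccnn : ∀ y z : Point n,
      0 ≤ accProb n (oneBitNoise n p) (fun w => (LO w : ℝ)) y z := by
    intro y z
    unfold accProb
    apply Finset.sum_nonneg
    intro u _
    apply Finset.sum_nonneg
    intro v _
    have h1 := noise_nonneg hp0 hp1 y u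
    have h2 := noise_nonneg hp0 hp1 z v
    have h3 : (0:ℝ) ≤ (if ((LO u : ℝ)) ≤ ((LO v : ℝ)) then (1:ℝ) else 0) := by positivity
    positivity
  have hFnn : ∀ z ∈ F, 0 ≤ stepEA n p x z := by
    intro z hz
    simp only [hF, Finset.mem_filter, Finset.mem_univ, true_and] at hz
    have hzx : z ≠ x := by
      intro h
      subst h
      have hi4 : (4:ℝ) ≤ (i:ℝ) := by exact_mod_cast hi
      rw [← hidef] at hz
      linarith
    unfold stepEA step
    rw [if_neg hzx, add_zero]
    exact mul_nonneg (hmutnn z) (haccnn x z)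
  -- key per-term bound
  have key : ∀ j ∈ J,
      p * ((j.val:ℝ)+1) / (8 * (n:ℝ)^2) ≤ stepEA n p x (Function.update x j false) := by
    intro j hj
    have hjlt : j.val < i := hmemJ j hj
    have hxj : x j = true := prefix_true hjlt
    have hne : Function.update x j false ≠ x := update_ne hxj
    have hstep : stepEA n p x (Function.update x j false)
        = mutProb n x (Function.update x j false)
          * accProb n (oneBitNoise n p) (fun y => (LO y:ℝ)) x (Function.update x j false) := by
      unfold stepEA step
      rw [if_neg hne, add_zero]
    rw [hstep]
    have hmut : (1/(n:ℝ)) * (1/4) ≤ mutProb n x (Function.update x j false) := by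
      unfold mutProb
      rw [ham_update hxj, pow_one]
      exact mul_le_mul_of_nonneg_left (quarter (by omega)) (by positivity)
    have hacc : ((j.val:ℝ)+1) * (p/n) * (1/2)
        ≤ accProb n (oneBitNoise n p) (fun y => (LO y:ℝ)) x (Function.update x j false) := by
      refine le_trans ?_ (acc_ge hp0 hp1 x j hjlt)
      have hnn : (0:ℝ) ≤ ((j.val:ℝ)+1) * (p/n) := by positivity
      nlinarith
    have haccnn' : (0:ℝ) ≤ ((j.val:ℝ)+1) * (p/n) * (1/2) := by positivity
    have hmutnn' : (0:ℝ) ≤ mutProb n x (Function.update x j false) :=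
      le_trans (by positivity) hmut
    calc p * ((j.val:ℝ)+1) / (8 * (n:ℝ)^2)
        = ((1/(n:ℝ)) * (1/4)) * (((j.val:ℝ)+1) * (p/n) * (1/2)) := by
          field_simp
          ring
      _ ≤ mutProb n x (Function.update x j false)
          * accProb n (oneBitNoise n p) (fun y => (LO y:ℝ)) x (Function.update x j false) :=
          mul_le_mul hmut hacc haccnn' hmutnn'
  -- chain of inequalities
  have himg : Finset.image (fun j : Fin n => Function.update x j false) J ⊆ F := by
    intro z hz
    rw [Finset.mem_image] at hz
    obtain ⟨j, hj, rfl⟩ := hz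
    have hjlt : j.val < i := hmemJ j hj
    have h2j : 2 * j.val < i := by
      simp only [hJ, Finset.mem_filter, Finset.mem_univ, true_and] at hj; exact hj
    simp only [hF, Finset.mem_filter, Finset.mem_univ, true_and]
    rw [LO_update (by rw [← hidef]; omega)]
    have : (2 * (j.val:ℝ)) < (i:ℝ) := by exact_mod_cast h2j
    linarith
  have hchain1 : ∑ j ∈ J, stepEA n p x (Function.update x j false)
      ≤ ∑ z ∈ F, stepEA n p x z := by
    rw [← Finset.sum_image hinj]
    exact Finset.sum_le_sum_of_subset_of_nonneg himg (fun z hz _ => hFnn z hz)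
  have hchain2 : ∑ j ∈ J, p * ((j.val:ℝ)+1) / (8 * (n:ℝ)^2)
      ≤ ∑ j ∈ J, stepEA n p x (Function.update x j false) :=
    Finset.sum_le_sum key
  -- evaluate the lower-bound sum
  set m : ℕ := (i + 1) / 2 with hm
  have hmn : m ≤ n := by omega
  have hJeq : J = Finset.univ.filter (fun j : Fin n => j.val < m) := by
    rw [hJ]
    apply Finset.filter_congr
    intro j _
    constructor <;> (intro h; omega)
  have hsum_nat : ∀ M : ℕ, 2 * ∑ k ∈ Finset.range M, (k+1) = M * (M+1) := by
    intro M
    induction M with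
    | zero => simp
    | succ M ih => rw [Finset.sum_range_succ, Nat.mul_add, ih]; ring
  have hS : 2 * ∑ k ∈ Finset.range m, (k+1) = m * (m+1) := hsum_nat m
  have hi2m : i ≤ 2 * m := by omega
  have hsq : i ^ 2 ≤ 8 * ∑ k ∈ Finset.range m, (k+1) := by nlinarith
  have hsum_real : ∑ j ∈ J, ((j.val:ℝ)+1)
      = ((∑ k ∈ Finset.range m, (k+1) : ℕ) : ℝ) := by
    rw [hJeq]
    rw [sum_fin_val_lt hn0 hmn (fun k => ((k:ℝ)+1))]
    push_cast
    rfl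
  have hsq_real : ((i:ℝ))^2 / 8 ≤ ∑ j ∈ J, ((j.val:ℝ)+1) := by
    rw [hsum_real]
    have : ((i:ℝ))^2 ≤ 8 * ((∑ k ∈ Finset.range m, (k+1) : ℕ) : ℝ) := by
      exact_mod_cast hsq
    linarith
  have hfinal : (1/64 : ℝ) * p * (i:ℝ)^2 / (n:ℝ)^2
      ≤ ∑ j ∈ J, p * ((j.val:ℝ)+1) / (8 * (n:ℝ)^2) := by
    have heq : ∑ j ∈ J, p * ((j.val:ℝ)+1) / (8 * (n:ℝ)^2)
        = (p / (8 * (n:ℝ)^2)) * ∑ j ∈ J, ((j.val:ℝ)+1) := by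
      rw [Finset.mul_sum]
      apply Finset.sum_congr rfl
      intro j _
      ring
    rw [heq]
    have hc : (0:ℝ) ≤ p / (8 * (n:ℝ)^2) := by positivity
    have := mul_le_mul_of_nonneg_left hsq_real hc
    calc (1/64 : ℝ) * p * (i:ℝ)^2 / (n:ℝ)^2
        = (p / (8 * (n:ℝ)^2)) * ((i:ℝ)^2 / 8) := by ring
      _ ≤ (p / (8 * (n:ℝ)^2)) * ∑ j ∈ J, ((j.val:ℝ)+1) := this
  calc (1/64 : ℝ) * p * ((LO x : ℕ):ℝ)^2 / (n:ℝ)^2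
      = (1/64 : ℝ) * p * (i:ℝ)^2 / (n:ℝ)^2 := by rw [← hidef]
    _ ≤ ∑ j ∈ J, p * ((j.val:ℝ)+1) / (8 * (n:ℝ)^2) := hfinal
    _ ≤ ∑ j ∈ J, stepEA n p x (Function.update x j false) := hchain2
    _ ≤ ∑ z ∈ F, stepEA n p x z := hchain1
    _ = ∑ z ∈ Finset.univ.filter
          (fun z : Point n => (LO z : ℝ) < ((LO x : ℕ):ℝ) / 2), stepEA n p x z := by
        rw [hF, ← hidef]
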